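/- The number of forests consisting of m binary trees (plane trees where each node has 0 or 2 children) with n nodes in total equals (m/n) · C(n, (n+m)/2), with the convention that the binomial coefficient is 0 if (n+m)/2 is not a nonnegative integer. -/

import Mathlib

/-- Plane trees: a node carries the (ordered) list of its subtrees. -/
inductive PlaneTree : Type
  | node : List PlaneTree → PlaneTree

namespace PlaneTree

/-- Total number of nodes of a plane tree. -/
def size : PlaneTree → ℕ
  | node ts => 1 + (ts.attach.map (fun x => size x.1)).sum
decreasing_by
  have := List.sizeOf_lt_of_mem x.2
  simp only [PlaneTree.node.sizeOf_spec]
  omega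

/-- A ternary tree is a plane tree in which every node has 0 or 3 children. -/
inductive IsTernary : PlaneTree → Prop
  | leaf : IsTernary (node [])
  | node3 (a b c : PlaneTree) : IsTernary a → IsTernary b → IsTernary c →
      IsTernary (node [a, b, c])

/-- Number of internal nodes (nodes with at least one child). -/
def numInternal : PlaneTree → ℕ
  | node ts => (if ts.length = 0 then 0 else 1) + (ts.attach.map (fun x => numInternal x.1)).sum
decreasing_by
  have := List.sizeOf_lt_of_mem x.2
  simp only [PlaneTree.node.sizeOf_spec]
  omega

/-- Number of leaves (nodes with no child). -/
def numLeaves : PlaneTree → ℕ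
  | node ts => (if ts.length = 0 then 1 else 0) + (ts.attach.map (fun x => numLeaves x.1)).sum
decreasing_by
  have := List.sizeOf_lt_of_mem x.2
  simp only [PlaneTree.node.sizeOf_spec]
  omega

/-- The list of root subtrees. -/
def children : PlaneTree → List PlaneTree
  | node ts => ts

/-- The fringe subtree of a tree at the node addressed by a word (sequence of child
indices), if it exists. -/
def subtreeAt : List ℕ → PlaneTree → Option PlaneTree
  | [], t => some t
  | i :: rest, t => (t.children[i]?).bind (subtreeAt rest)

end PlaneTree

namespace PlaneTree

/-- A binary tree is a plane tree in which every node has 0 or 2 children. -/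
inductive IsBinary : PlaneTree → Prop
  | leaf : IsBinary (node [])
  | node2 (a b : PlaneTree) : IsBinary a → IsBinary b → IsBinary (node [a, b])

end PlaneTree

namespace PlaneTree

lemma size_node (ts : List PlaneTree) : (node ts).size = 1 + (ts.map size).sum := by
  rw [size]; congr 1; rw [List.attach_map_val]

lemma size_pos (t : PlaneTree) : 0 < t.size := by
  cases t with
  | node ts => rw [size_node]; omega

end PlaneTree


open PlaneTree

/-- The forest predicate. -/
def ForestP (m n : ℕ) (f : List PlaneTree) : Prop :=
  f.length = m ∧ (∀ t ∈ f, t.IsBinary) ∧ (f.map PlaneTree.size).sum = n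

/-- The reverse step map (inl = first tree was a leaf, inr = first tree had two children). -/
def unstep : List PlaneTree ⊕ List PlaneTree → List PlaneTree
  | .inl rest => PlaneTree.node [] :: rest
  | .inr (a :: b :: rest) => PlaneTree.node [a, b] :: rest
  | .inr l => l

lemma unstep_mem (m n : ℕ) (x : {f // ForestP m n f} ⊕ {f // ForestP (m + 2) n f}) :
    ForestP (m + 1) (n + 1) (unstep (Sum.map Subtype.val Subtype.val x)) := by
  rcases x with ⟨f, hl, hb, hs⟩ | ⟨f, hl, hb, hs⟩
  · rw [Sum.map_inl]
    refine ⟨by simp [unstep, hl], ?_, ?_⟩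
    · intro t ht
      rcases List.mem_cons.1 ht with h | h
      · exact h ▸ IsBinary.leaf
      · exact hb t h
    · simp [unstep, size_node, hs, Nat.add_comm]
  · rw [Sum.map_inr]
    match f, hl, hb, hs with
    | a :: b :: rest, hl, hb, hs =>
      have ha : a.IsBinary := hb a (by simp)
      have hbb : b.IsBinary := hb b (by simp)
      refine ⟨?_, ?_, ?_⟩
      · simp only [unstep, List.length_cons]
        simp only [List.length_cons] at hl; omega
      · intro t ht
        simp only [unstep, List.mem_cons] at ht
        rcases ht with h | h
        · exact h ▸ IsBinary.node2 a b ha hbb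
        · exact hb t (List.mem_cons_of_mem _ (List.mem_cons_of_mem _ h))
      · simp only [unstep, List.map_cons, List.sum_cons, size_node, List.map_nil,
          List.sum_nil] at hs ⊢
        omega

lemma unstep_bij (m n : ℕ) :
    Function.Bijective (fun x : {f // ForestP m n f} ⊕ {f // ForestP (m + 2) n f} =>
      (⟨unstep (Sum.map Subtype.val Subtype.val x), unstep_mem m n x⟩ :
        {f // ForestP (m + 1) (n + 1) f})) := by
  constructor
  · rintro (⟨f, hf⟩ | ⟨f, hf⟩) (⟨g, hg⟩ | ⟨g, hg⟩) h <;>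
      simp only [Subtype.mk.injEq, Sum.map_inl, Sum.map_inr] at h
    · simp only [unstep] at h
      simp_all
    · match g, hg.1 with
      | a :: b :: rest, _ =>
        simp only [unstep, List.cons.injEq, PlaneTree.node.injEq] at h
        simp at h
    · match f, hf.1 with
      | a :: b :: rest, _ =>
        simp only [unstep, List.cons.injEq, PlaneTree.node.injEq] at h
        simp at h
    · match f, hf.1, g, hg.1 with
      | a :: b :: rest, _, c :: d :: rest', _ =>
        simp only [unstep, List.cons.injEq, PlaneTree.node.injEq] at h
        simp_all
  · rintro ⟨f, hl, hb, hs⟩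
    match f, hl with
    | t :: rest, hl =>
      have ht : t.IsBinary := hb t (by simp)
      have hrb : ∀ u ∈ rest, u.IsBinary := fun u hu => hb u (List.mem_cons_of_mem _ hu)
      simp only [List.length_cons] at hl
      cases ht with
      | leaf =>
        refine ⟨Sum.inl ⟨rest, by omega, hrb, ?_⟩, ?_⟩
        · simp only [List.map_cons, List.sum_cons, size_node, List.map_nil,
            List.sum_nil] at hs
          omega
        · simp [Sum.map_inl, unstep]
      | node2 a b ha hbb =>
        refine ⟨Sum.inr ⟨a :: b :: rest, by simp; omega, ?_, ?_⟩, ?_⟩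
        · intro u hu
          rcases List.mem_cons.1 hu with h | h
          · exact h ▸ ha
          · rcases List.mem_cons.1 h with h' | h'
            · exact h' ▸ hbb
            · exact hrb u h'
        · simp only [List.map_cons, List.sum_cons, size_node, List.map_nil,
            List.sum_nil] at hs ⊢
          omega
        · simp [Sum.map_inr, unstep]

lemma forest_empty_of_pos (n : ℕ) (hn : 0 < n) : IsEmpty {f // ForestP 0 n f} := by
  constructor
  rintro ⟨f, hl, hb, hs⟩
  rw [List.length_eq_zero_iff] at hl
  subst hl
  simp at hs
  omega

lemma forest_finite : ∀ n m : ℕ, Finite {f // ForestP m n f} := by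
  intro n
  induction n with
  | zero =>
    intro m
    have : Subsingleton {f // ForestP m 0 f} := by
      constructor
      rintro ⟨f, hf⟩ ⟨g, hg⟩
      have hfe : ∀ h : List PlaneTree, ForestP m 0 h → h = [] := by
        rintro (_ | ⟨t, rest⟩) ⟨hl, hb, hs⟩
        · rfl
        · exfalso
          simp only [List.map_cons, List.sum_cons] at hs
          have := size_pos t; omega
      exact Subtype.ext ((hfe f hf).trans (hfe g hg).symm)
    exact Finite.of_subsingleton
  | succ n ih =>
    intro m
    cases m with
    | zero =>
      have := forest_empty_of_pos (n + 1) (by omega)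
      exact Finite.of_subsingleton
    | succ m =>
      have : Finite ({f // ForestP m n f} ⊕ {f // ForestP (m + 2) n f}) := by
        have := ih m; have := ih (m + 2); infer_instance
      exact Finite.of_surjective _ (unstep_bij m n).2

/-- Closed form for the number of binary forests. -/
def forestT (m n : ℕ) : ℕ :=
  if n = 0 then (if m = 0 then 1 else 0)
  else if (n + m) % 2 = 0 then
    Nat.choose (n - 1) ((n + m) / 2 - 1) - Nat.choose (n - 1) ((n + m) / 2)
  else 0

/-- Binomials decrease past the middle. -/
lemma choose_anti (n j : ℕ) (h : n ≤ 2 * j + 1) :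
    Nat.choose n (j + 1) ≤ Nat.choose n j := by
  have h1 := Nat.choose_succ_right_eq n j
  have h2 : Nat.choose n j * (n - j) ≤ Nat.choose n j * (j + 1) :=
    Nat.mul_le_mul_left _ (by omega)
  have := h1.le.trans h2
  exact Nat.le_of_mul_le_mul_right this (by omega)

lemma forestT_rec (m n : ℕ) : forestT (m + 1) (n + 1) = forestT m n + forestT (m + 2) n := by
  cases n with
  | zero =>
    simp only [forestT]
    rcases Nat.even_or_odd m with ⟨p, hp⟩ | ⟨p, hp⟩
    · cases p with
      | zero => subst hp; decide
      | succ p =>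
        have h1 : (0 + 1 + (m + 1)) % 2 = 0 := by omega
        have h2 : (0 + 1 + (m + 1)) / 2 = p + 2 := by omega
        simp only [if_neg (by omega : ¬ (0 + 1 : ℕ) = 0), h1, h2, if_pos rfl,
          if_neg (by omega : ¬ m = 0), if_neg (by omega : ¬ m + 2 = 0), if_true,
          Nat.add_sub_cancel]
        have c1 : Nat.choose 0 (p + 1) = 0 := Nat.choose_eq_zero_of_lt (by omega)
        have c2 : Nat.choose 0 (p + 2) = 0 := Nat.choose_eq_zero_of_lt (by omega)
        simp [c1, c2]
    · have h1 : ¬ (0 + 1 + (m + 1)) % 2 = 0 := by omega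
      simp only [if_neg (by omega : ¬ (0 + 1 : ℕ) = 0), if_neg h1,
        if_neg (by omega : ¬ m = 0), if_neg (by omega : ¬ m + 2 = 0)]
      rfl
  | succ nn =>
    simp only [forestT, if_neg (by omega : ¬ (nn + 1 + 1 : ℕ) = 0),
      if_neg (by omega : ¬ (nn + 1 : ℕ) = 0)]
    rcases Nat.even_or_odd (nn + 1 + m) with he | ho
    · obtain ⟨k, hk⟩ := he
      have hk1 : k ≥ 1 := by omega
      obtain ⟨j, hj⟩ : ∃ j, k = j + 1 := ⟨k - 1, by omega⟩
      subst hj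
      have e1 : (nn + 1 + 1 + (m + 1)) % 2 = 0 := by omega
      have e2 : (nn + 1 + m) % 2 = 0 := by omega
      have e3 : (nn + 1 + (m + 2)) % 2 = 0 := by omega
      have d1 : (nn + 1 + 1 + (m + 1)) / 2 = j + 1 + 1 := by omega
      have d2 : (nn + 1 + m) / 2 = j + 1 := by omega
      have d3 : (nn + 1 + (m + 2)) / 2 = j + 1 + 1 := by omega
      simp only [e1, e2, e3, d1, d2, d3, if_pos rfl, if_true, Nat.add_sub_cancel]
      have p1 : Nat.choose (nn + 1) (j + 1) = Nat.choose nn j + Nat.choose nn (j + 1) :=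
        Nat.choose_succ_succ nn j
      have p2 : Nat.choose (nn + 1) (j + 1 + 1) = Nat.choose nn (j + 1) + Nat.choose nn (j + 1 + 1) :=
        Nat.choose_succ_succ nn (j + 1)
      have a1 : Nat.choose nn (j + 1) ≤ Nat.choose nn j := choose_anti nn j (by omega)
      have a2 : Nat.choose nn (j + 1 + 1) ≤ Nat.choose nn (j + 1) := choose_anti nn (j + 1) (by omega)
      omega
    · have o1 : ¬ (nn + 1 + 1 + (m + 1)) % 2 = 0 := by
        rcases ho with ⟨p, hp⟩; omega
      have o2 : ¬ (nn + 1 + m) % 2 = 0 := by rcases ho with ⟨p, hp⟩; omega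
      have o3 : ¬ (nn + 1 + (m + 2)) % 2 = 0 := by rcases ho with ⟨p, hp⟩; omega
      simp only [if_neg o1, if_neg o2, if_neg o3]

lemma forest_card : ∀ n m : ℕ, Nat.card {f // ForestP m n f} = forestT m n := by
  intro n
  induction n with
  | zero =>
    intro m
    cases m with
    | zero =>
      have : Unique {f // ForestP 0 0 f} := by
        refine ⟨⟨⟨[], by simp [ForestP]⟩⟩, ?_⟩
        rintro ⟨f, hl, hb, hs⟩
        rw [List.length_eq_zero_iff] at hl
        exact Subtype.ext hl
      simp [forestT, Nat.card_unique]
    | succ m =>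
      have : IsEmpty {f // ForestP (m + 1) 0 f} := by
        constructor
        rintro ⟨(_ | ⟨t, rest⟩), hl, hb, hs⟩
        · simp at hl
        · simp only [List.map_cons, List.sum_cons] at hs
          have := size_pos t; omega
      simp [forestT, Nat.card_of_isEmpty]
  | succ n ih =>
    intro m
    cases m with
    | zero =>
      have := forest_empty_of_pos (n + 1) (by omega)
      rw [Nat.card_of_isEmpty]
      simp only [forestT, if_neg (by omega : ¬ (n + 1 : ℕ) = 0)]
      rcases Nat.even_or_odd (n + 1) with ⟨k, hk⟩ | ho
      · have e1 : (n + 1 + 0) % 2 = 0 := by omega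
        have d1 : (n + 1 + 0) / 2 = k := by omega
        rw [if_pos e1, d1]
        simp only [Nat.add_sub_cancel]
        have hsym : Nat.choose n (k - 1) = Nat.choose n k := by
          have h2 : n - k = k - 1 := by omega
          rw [← h2, Nat.choose_symm (by omega)]
        omega
      · rw [if_neg (by rcases ho with ⟨p, hp⟩; omega)]
    | succ m =>
      have f1 : Finite {f // ForestP m n f} := forest_finite n m
      have f2 : Finite {f // ForestP (m + 2) n f} := forest_finite n (m + 2)
      rw [← Nat.card_congr (Equiv.ofBijective _ (unstep_bij m n)), Nat.card_sum,
        ih m, ih (m + 2), forestT_rec]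


/-- The number of forests of `m` binary trees with `n` nodes in total equals
`(m/n) · C(n, (n+m)/2)`, with the convention that the binomial coefficient is `0`
if `(n+m)/2` is not a nonnegative integer. -/
theorem binary_forest_count (m n : ℕ) (hn : 0 < n) :
    n * Nat.card {f : List PlaneTree //
        f.length = m ∧ (∀ t ∈ f, t.IsBinary) ∧ (f.map PlaneTree.size).sum = n} =
      if (n + m) % 2 = 0 then m * Nat.choose n ((n + m) / 2) else 0 := by
  have hc : Nat.card {f : List PlaneTree //
      f.length = m ∧ (∀ t ∈ f, t.IsBinary) ∧ (f.map PlaneTree.size).sum = n} =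
      forestT m n := forest_card n m
  rw [hc]
  simp only [forestT, if_neg (by omega : ¬ n = 0)]
  rcases Nat.even_or_odd (n + m) with ⟨k, hk⟩ | ho
  · have e1 : (n + m) % 2 = 0 := by omega
    have d1 : (n + m) / 2 = k := by omega
    rw [if_pos e1, if_pos e1, d1]
    have hk1 : k ≥ 1 := by omega
    obtain ⟨j, hj⟩ : ∃ j, k = j + 1 := ⟨k - 1, by omega⟩
    obtain ⟨nn, hnn⟩ : ∃ nn, n = nn + 1 := ⟨n - 1, by omega⟩
    subst hj hnn
    simp only [Nat.add_sub_cancel]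
    -- key identities
    have i1 : (nn + 1) * Nat.choose nn j = Nat.choose (nn + 1) (j + 1) * (j + 1) :=
      Nat.add_one_mul_choose_eq nn j
    have i2 : Nat.choose (nn + 1) (j + 1 + 1) * (j + 1 + 1) =
        Nat.choose (nn + 1) (j + 1) * (nn + 1 - (j + 1)) :=
      Nat.choose_succ_right_eq (nn + 1) (j + 1)
    have i3 : (nn + 1) * Nat.choose nn (j + 1) = Nat.choose (nn + 1) (j + 1 + 1) * (j + 1 + 1) :=
      Nat.add_one_mul_choose_eq nn (j + 1)
    have a1 : Nat.choose nn (j + 1) ≤ Nat.choose nn j := choose_anti nn j (by omega)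
    rcases le_or_gt (j + 1) (nn + 1) with hle | hlt
    · rw [Nat.mul_sub_left_distrib, i1, i3, i2, Nat.mul_comm m,
        ← Nat.mul_sub_left_distrib]
      congr 1
      omega
    · have z1 : Nat.choose (nn + 1) (j + 1) = 0 := Nat.choose_eq_zero_of_lt hlt
      have z2 : Nat.choose nn j = 0 := Nat.choose_eq_zero_of_lt (by omega)
      have z3 : Nat.choose nn (j + 1) = 0 := Nat.choose_eq_zero_of_lt (by omega)
      simp [z1, z2, z3]
  · rw [if_neg (by rcases ho with ⟨p, hp⟩; omega), if_neg (by rcases ho with ⟨p, hp⟩; omega)]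
    omega
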